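/- Let (R, m, k) be a commutative noetherian local ring, and assume either that R is m-adically complete or that the residue field k is an uncountable set. Let I be an ideal of R and let {p_i}_{i ∈ ℕ} be a countable family of prime ideals of R. If I is not contained in p_i for any i ∈ ℕ, then I is not contained in the union ⋃_{i ∈ ℕ} p_i. -/

import Mathlib

open IsLocalRing

universe u

section CpaAux

variable {R : Type u} [CommRing R] [IsNoetherianRing R] [IsLocalRing R]

/-- Krull intersection: escape from `a + m^c` for some `c`. -/
lemma cpa_krull_esc (a : Ideal R) (x : R) (hx : x ∉ a) :
    ∃ c : ℕ, x ∉ a + maximalIdeal R ^ c := by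
  by_contra hc
  push_neg at hc
  have hbot : (⨅ i : ℕ, maximalIdeal R ^ i • ⊤ : Submodule R (R ⧸ a)) = ⊥ :=
    Ideal.iInf_pow_smul_eq_bot_of_isLocalRing (I := maximalIdeal R) (M := R ⧸ a)
      (IsLocalRing.maximalIdeal.isMaximal R).ne_top
  have hmem : (Submodule.mkQ a) x ∈ (⨅ i : ℕ, maximalIdeal R ^ i • ⊤ : Submodule R (R ⧸ a)) := by
    rw [Submodule.mem_iInf]
    intro c
    have := hc c
    rw [Ideal.add_eq_sup, Submodule.mem_sup] at this
    obtain ⟨u, hu, v, hv, huv⟩ := this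
    have h1 : (Submodule.mkQ a) x = v • (Submodule.mkQ a) 1 := by
      have : (Submodule.mkQ a) u = 0 := (Submodule.Quotient.mk_eq_zero a).2 hu
      rw [← huv, map_add, this, zero_add, ← map_smul, smul_eq_mul, mul_one]
    rw [h1]
    exact Submodule.smul_mem_smul hv Submodule.mem_top
  rw [hbot, Submodule.mem_bot] at hmem
  exact hx ((Submodule.Quotient.mk_eq_zero a).1 hmem)

/-- Uniform escape for finitely many ideals, with a lower bound on the exponent. -/
lemma cpa_krull_esc_forall (N K : ℕ) (q : ℕ → Ideal R) (x : R)
    (hx : ∀ j ≤ N, x ∉ q j) :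
    ∃ c : ℕ, K ≤ c ∧ ∀ j ≤ N, x ∉ q j + maximalIdeal R ^ c := by
  have H : ∀ j : ℕ, ∃ c : ℕ, j ≤ N → x ∉ q j + maximalIdeal R ^ c := by
    intro j
    by_cases hj : j ≤ N
    · obtain ⟨c, hc⟩ := cpa_krull_esc (q j) x (hx j hj)
      exact ⟨c, fun _ => hc⟩
    · exact ⟨0, fun h' => absurd h' hj⟩
  choose f hf using H
  refine ⟨K + (Finset.range (N + 1)).sup f, Nat.le_add_right K _, ?_⟩
  intro j hj hmem
  have hfj : f j ≤ K + (Finset.range (N + 1)).sup f :=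
    (Finset.le_sup (Finset.mem_range.2 (Nat.lt_succ_of_le hj))).trans (Nat.le_add_left _ _)
  apply hf j hj
  have hle : q j + maximalIdeal R ^ (K + (Finset.range (N + 1)).sup f)
      ≤ q j + maximalIdeal R ^ f j := by
    rw [Ideal.add_eq_sup, Ideal.add_eq_sup]
    exact sup_le_sup_left (Ideal.pow_le_pow_right hfj) (q j)
  exact hle hmem

/-- One step of the approximation in the complete case. -/
lemma cpa_step (I : Ideal R) (p : ℕ → Ideal R) (hp : ∀ i, (p i).IsPrime)
    (h : ∀ i, ¬ I ≤ p i) (hm : ∀ i, p i ≠ maximalIdeal R)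
    (n : ℕ) (x : R) (c : ℕ) (hc1 : 1 ≤ c) (hx : x ∈ I)
    (hnp : ∀ j ≤ n, x ∉ p j) :
    ∃ y : R, x + y ∈ I ∧ y ∈ maximalIdeal R ^ c ∧ ∀ j ≤ n + 1, x + y ∉ p j := by
  classical
  by_cases hxp : x ∈ p (n + 1)
  · set S : Finset ℕ := (Finset.range (n + 1)).filter (fun j => ¬ p j ≤ p (n + 1)) with hS
    set J : Ideal R := maximalIdeal R ^ c * I * ∏ j ∈ S, p j with hJdef
    have hJ : ¬ J ≤ p (n + 1) := by
      intro hle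
      rcases (hp (n + 1)).mul_le.1 hle with h1 | h2
      · rcases (hp (n + 1)).mul_le.1 h1 with hmle | hIle
        · have : maximalIdeal R ≤ p (n + 1) :=
            (Ideal.IsPrime.pow_le_iff (by omega)).1 hmle
          exact hm (n + 1) (le_antisymm
            (IsLocalRing.le_maximalIdeal (hp (n + 1)).ne_top) this).symm.symm
        · exact h (n + 1) hIle
      · obtain ⟨j, hjS, hjle⟩ := ((hp (n + 1)).prod_le).1 h2
        exact (Finset.mem_filter.1 hjS).2 hjle
    obtain ⟨y, hyJ, hyp⟩ := SetLike.not_le_iff_exists.1 hJ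
    have h1 : y ∈ maximalIdeal R ^ c * I := Ideal.mul_le_left hyJ
    have hyI : y ∈ I := Ideal.mul_le_right h1
    have hym : y ∈ maximalIdeal R ^ c := Ideal.mul_le_left h1
    have hyS : ∀ j ∈ S, y ∈ p j := fun j hj =>
      (Ideal.prod_le_inf.trans (Finset.inf_le hj)) (Ideal.mul_le_right hyJ)
    have hnot : x + y ∉ p (n + 1) := fun hmem =>
      hyp (by simpa using (p (n + 1)).sub_mem hmem hxp)
    refine ⟨y, I.add_mem hx hyI, hym, ?_⟩
    intro j hj hmem
    rcases Nat.lt_succ_iff_lt_or_eq.1 (Nat.lt_succ_of_le hj) with hj' | hj'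
    · have hjn : j ≤ n := Nat.lt_succ_iff.1 hj'
      by_cases hle : p j ≤ p (n + 1)
      · exact hnot (hle hmem)
      · have hjS : j ∈ S := Finset.mem_filter.2 ⟨Finset.mem_range.2 hj', hle⟩
        exact hnp j hjn (by simpa using (p j).sub_mem hmem (hyS j hjS))
    · exact hnot (by rwa [hj'] at hmem)
  · refine ⟨0, by simpa using hx, zero_mem _, ?_⟩
    intro j hj
    rw [add_zero]
    rcases Nat.lt_succ_iff_lt_or_eq.1 (Nat.lt_succ_of_le hj) with hj' | hj'
    · exact hnp j (Nat.lt_succ_iff.1 hj')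
    · rw [hj']; exact hxp

/-- Recursion helper producing a sequence with an invariant and a step relation. -/
lemma cpa_rec {α : Type*} (Q : ℕ → α → Prop) (Rel : ℕ → α → α → Prop)
    (init : ∃ a, Q 0 a) (next : ∀ n a, Q n a → ∃ b, Q (n + 1) b ∧ Rel n a b) :
    ∃ f : ℕ → α, (∀ n, Q n (f n)) ∧ ∀ n, Rel n (f n) (f (n + 1)) := by
  classical
  let F : ∀ n : ℕ, {a : α // Q n a} := fun n =>
    Nat.rec ⟨Classical.choose init, Classical.choose_spec init⟩
      (fun n s => ⟨Classical.choose (next n s.1 s.2),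
        (Classical.choose_spec (next n s.1 s.2)).1⟩) n
  exact ⟨fun n => (F n).1, fun n => (F n).2,
    fun n => (Classical.choose_spec (next n (F n).1 (F n).2)).2⟩

end CpaAux

/-- **Countable prime avoidance.**  Let `(R, m, k)` be a noetherian local ring which is
`m`-adically complete or has uncountable residue field.  If an ideal `I` is not contained in
any member of a countable family of primes, then `I` is not contained in their union. -/
theorem countable_prime_avoidance (R : Type u) [CommRing R] [IsNoetherianRing R] [IsLocalRing R]
    (hR : IsAdicComplete (maximalIdeal R) R ∨ Uncountable (ResidueField R))
    (I : Ideal R) (p : ℕ → Ideal R) (hp : ∀ i, (p i).IsPrime)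
    (h : ∀ i, ¬ I ≤ p i) :
    ¬ (I : Set R) ⊆ ⋃ i : ℕ, (p i : Set R) := by
  intro hsub
  have hIT : I ≠ ⊤ := by
    intro hT
    have h1 : (1 : R) ∈ (I : Set R) := by rw [hT]; exact Submodule.mem_top
    obtain ⟨i, hi⟩ := Set.mem_iUnion.1 (hsub h1)
    exact (hp i).ne_top ((Ideal.eq_top_iff_one _).2 hi)
  have hm' : ∀ i, p i ≠ maximalIdeal R := by
    intro i hi
    exact h i (by rw [hi]; exact IsLocalRing.le_maximalIdeal hIT)
  have hsmultop : ∀ J : Ideal R, (J • ⊤ : Submodule R R) = J := by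
    intro J
    rw [smul_eq_mul, Ideal.mul_top]
  rcases hR with hcomp | hunc
  · -- complete case
    set Inv : ℕ → R × ℕ → Prop := fun n s =>
      s.1 ∈ I ∧ (∀ j ≤ n, s.1 ∉ p j + maximalIdeal R ^ s.2) ∧ n + 1 ≤ s.2 with hInv
    have hp_of : ∀ n s, Inv n s → ∀ j ≤ n, s.1 ∉ p j := by
      intro n s hs j hj hmem
      apply hs.2.1 j hj
      rw [Ideal.add_eq_sup]
      exact le_sup_left (α := Ideal R) hmem
    have init : ∃ s, Inv 0 s := by
      obtain ⟨x0, hx0I, hx0p⟩ := SetLike.not_le_iff_exists.1 (h 0)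
      obtain ⟨c, hc1, hc⟩ := cpa_krull_esc_forall 0 1 p x0 (by
        intro j hj
        rw [Nat.le_zero] at hj
        rw [hj]
        exact hx0p)
      exact ⟨(x0, c), hx0I, hc, hc1⟩
    have next : ∀ n s, Inv n s →
        ∃ s' : R × ℕ, Inv (n + 1) s' ∧ s'.1 - s.1 ∈ maximalIdeal R ^ s.2 ∧ s.2 ≤ s'.2 := by
      intro n s hs
      obtain ⟨y, hyI, hym, hynot⟩ := cpa_step I p hp h hm' n s.1 s.2
        (le_trans (by omega) hs.2.2) hs.1 (hp_of n s hs)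
      obtain ⟨c', hc'K, hc'⟩ :=
        cpa_krull_esc_forall (n + 1) (max s.2 (n + 2)) p (s.1 + y) hynot
      exact ⟨(s.1 + y, c'), ⟨hyI, hc', le_trans (le_max_right _ _) hc'K⟩,
        by simpa using hym, le_trans (le_max_left _ _) hc'K⟩
    obtain ⟨g, hg, hlink⟩ := cpa_rec Inv
      (fun n a b => b.1 - a.1 ∈ maximalIdeal R ^ a.2 ∧ a.2 ≤ b.2) init next
    have cmono : Monotone (fun n => (g n).2) :=
      monotone_nat_of_le_succ (fun n => (hlink n).2)
    have hdiff : ∀ n N : ℕ, n ≤ N → (g N).1 - (g n).1 ∈ maximalIdeal R ^ (g n).2 := by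
      intro n N hnN
      induction N, hnN using Nat.le_induction with
      | base => rw [sub_self]; exact zero_mem _
      | succ N hN ih =>
        have h1 : (g (N + 1)).1 - (g N).1 ∈ maximalIdeal R ^ (g n).2 :=
          Ideal.pow_le_pow_right (cmono hN) (hlink N).1
        have h2 := Submodule.add_mem _ h1 ih
        rwa [sub_add_sub_cancel] at h2
    have hcauchy : ∀ {a b : ℕ}, a ≤ b →
        (g a).1 ≡ (g b).1 [SMOD (maximalIdeal R ^ a • ⊤ : Submodule R R)] := by
      intro a b hab
      rw [SModEq.sub_mem, hsmultop]
      have ha : a ≤ (g a).2 := le_trans (Nat.le_succ a) (hg a).2.2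
      have h1 : (g b).1 - (g a).1 ∈ maximalIdeal R ^ a :=
        Ideal.pow_le_pow_right ha (hdiff a b hab)
      simpa [neg_sub] using neg_mem h1
    obtain ⟨L, hL⟩ := hcomp.toIsPrecomplete.prec hcauchy
    have hLd : ∀ n : ℕ, (g n).1 - L ∈ maximalIdeal R ^ n := by
      intro n
      have := hL n
      rwa [SModEq.sub_mem, hsmultop] at this
    have hLI : L ∈ I := by
      by_contra hLI
      obtain ⟨c, hc⟩ := cpa_krull_esc I L hLI
      apply hc
      rw [Ideal.add_eq_sup, Submodule.mem_sup]
      exact ⟨(g c).1, (hg c).1, -((g c).1 - L), neg_mem (hLd c), by ring⟩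
    obtain ⟨i, hi⟩ := Set.mem_iUnion.1 (hsub hLI)
    apply (hg i).2.1 i le_rfl
    have hiN : i ≤ (g i).2 := le_trans (Nat.le_succ i) (hg i).2.2
    have h1 : L - (g i).1 ∈ maximalIdeal R ^ (g i).2 := by
      have a1 : L - (g (g i).2).1 ∈ maximalIdeal R ^ (g i).2 := by
        simpa [neg_sub] using neg_mem (hLd (g i).2)
      have a2 : (g (g i).2).1 - (g i).1 ∈ maximalIdeal R ^ (g i).2 :=
        hdiff i (g i).2 hiN
      have := Submodule.add_mem _ a1 a2
      rwa [sub_add_sub_cancel] at this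
    rw [Ideal.add_eq_sup, Submodule.mem_sup]
    exact ⟨L, hi, -(L - (g i).1), neg_mem h1, by ring⟩
  · -- uncountable residue field case
    have key : ∀ (n : ℕ) (l : List R), l.length ≤ n → (∀ x ∈ l, x ∈ I) →
        ∃ i, ∀ x ∈ l, x ∈ p i := by
      intro n
      induction n with
      | zero =>
        intro l hl _
        rw [Nat.le_zero, List.length_eq_zero_iff] at hl
        subst hl
        exact ⟨0, by simp⟩
      | succ n ih =>
        intro l hl hmem
        match l with
        | [] => exact ⟨0, by simp⟩
        | [a] =>
          have ha : a ∈ (I : Set R) := hmem a (by simp)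
          obtain ⟨i, hi⟩ := Set.mem_iUnion.1 (hsub ha)
          refine ⟨i, ?_⟩
          intro x hx
          rw [List.mem_singleton] at hx
          rw [hx]
          exact hi
        | a :: b :: t =>
          have hlen : ∀ s : R, ((a + s * b) :: t).length ≤ n := by
            simp only [List.length_cons] at hl ⊢
            omega
          have hmem' : ∀ s : R, ∀ x ∈ (a + s * b) :: t, x ∈ I := by
            intro s x hx
            rcases List.mem_cons.1 hx with rfl | hx
            · exact I.add_mem (hmem a (by simp)) (I.mul_mem_left s (hmem b (by simp)))
            · exact hmem x (by simp [hx])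
          let F : ResidueField R → ℕ := fun κ =>
            Classical.choose (ih _ (hlen (Function.surjInv residue_surjective κ)) (hmem' _))
          have hF : ∀ κ, ∀ x ∈ (a + (Function.surjInv residue_surjective κ) * b) :: t,
              x ∈ p (F κ) :=
            fun κ => Classical.choose_spec (ih _ (hlen _) (hmem' _))
          have hninj : ¬ Function.Injective F := by
            intro hinj
            exact @not_countable (ResidueField R) hunc hinj.countable
          obtain ⟨κ₁, κ₂, hFeq, hne⟩ := Function.not_injective_iff.1 hninj
          have hu : IsUnit (Function.surjInv (residue_surjective (R := R)) κ₁ -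
              Function.surjInv residue_surjective κ₂) := by
            rw [← IsLocalRing.notMem_maximalIdeal]
            intro hmm
            have := (IsLocalRing.residue_eq_zero_iff _).2 hmm
            have e1 : residue R (Function.surjInv residue_surjective κ₁) = κ₁ :=
              Function.surjInv_eq _ _
            have e2 : residue R (Function.surjInv residue_surjective κ₂) = κ₂ :=
              Function.surjInv_eq _ _
            rw [map_sub, e1, e2, sub_eq_zero] at this
            exact hne this
          have h₁ : a + Function.surjInv residue_surjective κ₁ * b ∈ p (F κ₁) :=
            hF κ₁ _ List.mem_cons_self
          have h₂ : a + Function.surjInv residue_surjective κ₂ * b ∈ p (F κ₁) := by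
            rw [hFeq]
            exact hF κ₂ _ List.mem_cons_self
          have hb : b ∈ p (F κ₁) := by
            have hsub2 : (Function.surjInv (residue_surjective (R := R)) κ₁ -
                Function.surjInv residue_surjective κ₂) * b ∈ p (F κ₁) := by
              have := (p (F κ₁)).sub_mem h₁ h₂
              have heq : (a + Function.surjInv residue_surjective κ₁ * b) -
                  (a + Function.surjInv residue_surjective κ₂ * b) =
                  (Function.surjInv (residue_surjective (R := R)) κ₁ -
                    Function.surjInv residue_surjective κ₂) * b := by ring
              rwa [heq] at this
            exact (Ideal.unit_mul_mem_iff_mem _ hu).1 hsub2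
          have ha : a ∈ p (F κ₁) := by
            have := (p (F κ₁)).sub_mem h₁
              ((p (F κ₁)).mul_mem_left (Function.surjInv residue_surjective κ₁) hb)
            simpa using this
          refine ⟨F κ₁, ?_⟩
          intro x hx
          rcases List.mem_cons.1 hx with rfl | hx
          · exact ha
          rcases List.mem_cons.1 hx with rfl | hx
          · exact hb
          · exact hF κ₁ x (List.mem_cons_of_mem _ hx)
    obtain ⟨s, hsI⟩ := IsNoetherian.noetherian I
    obtain ⟨i, hi⟩ := key s.toList.length s.toList le_rfl (fun x hx => by
      rw [← hsI]
      exact Ideal.subset_span (by simpa using hx))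
    apply h i
    rw [← hsI, Submodule.span_le]
    intro x hx
    exact hi x (by simpa using hx)
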